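/- If the function F is constant on the set {z ∈ ℂ^m : Σ_{k=1}^m |z_k|² = 1 and z_k ≠ 0 for every k}, then θ_i = 1 for every 1 ≤ i ≤ m (i.e. the flow is the Hopf fibration). -/

import Mathlib

open scoped BigOperators ComplexConjugate

/-- The real inner product on `ℂ^m`: `⟨v,w⟩ = Re ∑_k v_k · conj (w_k)`. -/
noncomputable def rinner {m : ℕ} (v w : Fin m → ℂ) : ℝ :=
  (∑ k : Fin m, v k * conj (w k)).re

/-- The vector field `X(z) = (iθ₁z₁,…,iθ_m z_m)` generating the flow. -/
noncomputable def sphX {m : ℕ} (θ : Fin m → ℝ) (z : Fin m → ℂ) : Fin m → ℂ :=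
  fun k => Complex.I * (θ k : ℂ) * z k

/-- The vector field `Y_l` (here `l` is a 0-based index; the paper's `Y_l` for
`1 ≤ l ≤ m−1` corresponds to indices `l` with `(l:ℕ)+1 < m`): its components are `0` below `l`,
`−(∑_{k>l}|z_k|²)·z_l` at `l`, and `|z_l|²·z_k` above `l`. -/
noncomputable def sphY {m : ℕ} (l : Fin m) (z : Fin m → ℂ) : Fin m → ℂ := fun k =>
  if (k : ℕ) < (l : ℕ) then 0
  else if k = l then
    -(((∑ j ∈ Finset.univ.filter (fun j : Fin m => (l : ℕ) < (j : ℕ)), ‖z j‖ ^ 2 : ℝ) : ℂ)) * z l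
  else ((‖z l‖ ^ 2 : ℝ) : ℂ) * z k

/-- The generic vector field `W_p` (0-based index `p`; the paper's `W_p` for `1 ≤ p ≤ m−2`
corresponds to indices `p` with `(p:ℕ)+2 < m`): components `0` below `p`,
`−(∑_{k>p}θ_k²|z_k|²)·i z_p` at `p`, and `θ_p θ_k |z_p|²·i z_k` above `p`. -/
noncomputable def sphW {m : ℕ} (θ : Fin m → ℝ) (p : Fin m) (z : Fin m → ℂ) : Fin m → ℂ := fun k =>
  if (k : ℕ) < (p : ℕ) then 0
  else if k = p then
    -(((∑ j ∈ Finset.univ.filter (fun j : Fin m => (p : ℕ) < (j : ℕ)),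
        (θ j) ^ 2 * ‖z j‖ ^ 2 : ℝ) : ℂ)) * (Complex.I * z p)
  else (((θ p) * (θ k) * ‖z p‖ ^ 2 : ℝ) : ℂ) * (Complex.I * z k)

/-- The special last vector field `W_{m−1}`, with `a` the index `m−2` and `b` the index `m−1`
(0-based): component `−θ_b|z_b|²·i z_a` at `a`, `θ_a|z_a|²·i z_b` at `b`, and `0` elsewhere. -/
noncomputable def sphWlast {m : ℕ} (θ : Fin m → ℝ) (a b : Fin m) (z : Fin m → ℂ) :
    Fin m → ℂ := fun k =>
  if k = a then -(((θ b * ‖z b‖ ^ 2 : ℝ)) : ℂ) * (Complex.I * z a)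
  else if k = b then (((θ a * ‖z a‖ ^ 2 : ℝ)) : ℂ) * (Complex.I * z b)
  else 0

/-- The full family `W_p`, `1 ≤ p ≤ m−1` (0-based: `(p:ℕ)+1 < m`): the generic `W_p` for
`p ≤ m−2` and the special `W_{m−1}` for the last index. -/
noncomputable def sphWfull {m : ℕ} (hm : 2 ≤ m) (θ : Fin m → ℝ) (p : Fin m) :
    (Fin m → ℂ) → (Fin m → ℂ) :=
  if (p : ℕ) = m - 2 then sphWlast θ ⟨m - 2, by omega⟩ ⟨m - 1, by omega⟩ else sphW θ p

/-- The Lie bracket `[U,V](z) = (DV)_z(U(z)) − (DU)_z(V(z))` of vector fields on `ℂ^m`,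
`D` being the Fréchet derivative over `ℝ`. -/
noncomputable def bracket {m : ℕ} (U V : (Fin m → ℂ) → (Fin m → ℂ)) (z : Fin m → ℂ) :
    Fin m → ℂ :=
  fderiv ℝ V z (U z) - fderiv ℝ U z (V z)

/-- The function `F` of the paper (with `a`, `b` standing for the 0-based indices `m−2`, `m−1`):
`F(z) = (2/|X|²)·{ θ_{m−1}²θ_m²(|z_{m−1}|²+|z_m|²)/(θ_{m−1}²|z_{m−1}|²+θ_m²|z_m|²)
 + ∑_{j=1}^{m−2} θ_j²(∑_{s>j}θ_s²|z_s|²)(∑_{k≥j}|z_k|²)/[(∑_{s≥j}θ_s²|z_s|²)(∑_{k>j}|z_k|²)]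
 + ∑_{j=1}^{m−2}∑_{i=j+1}^{m−1} |z_i|²|z_j|²(∑_{k>i}(θ_i²−θ_k²)|z_k|²)²
     /[(∑_{t>j}θ_t²|z_t|²)(∑_{s≥j}θ_s²|z_s|²)(∑_{k>i}|z_k|²)(∑_{k≥i}|z_k|²)] }`. -/
noncomputable def Ffun {m : ℕ} (θ : Fin m → ℝ) (a b : Fin m) (z : Fin m → ℂ) : ℝ :=
  (2 / rinner (sphX θ z) (sphX θ z)) *
    ((θ a) ^ 2 * (θ b) ^ 2 * (‖z a‖ ^ 2 + ‖z b‖ ^ 2)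
        / ((θ a) ^ 2 * ‖z a‖ ^ 2 + (θ b) ^ 2 * ‖z b‖ ^ 2)
      + (∑ j ∈ Finset.univ.filter (fun j : Fin m => (j : ℕ) < m - 2),
          (θ j) ^ 2
            * (∑ s ∈ Finset.univ.filter (fun s : Fin m => (j : ℕ) < (s : ℕ)),
                (θ s) ^ 2 * ‖z s‖ ^ 2)
            * (∑ k ∈ Finset.univ.filter (fun k : Fin m => (j : ℕ) ≤ (k : ℕ)), ‖z k‖ ^ 2)
            / ((∑ s ∈ Finset.univ.filter (fun s : Fin m => (j : ℕ) ≤ (s : ℕ)),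
                  (θ s) ^ 2 * ‖z s‖ ^ 2)
                * (∑ k ∈ Finset.univ.filter (fun k : Fin m => (j : ℕ) < (k : ℕ)), ‖z k‖ ^ 2)))
      + ∑ j ∈ Finset.univ.filter (fun j : Fin m => (j : ℕ) < m - 2),
          ∑ i ∈ Finset.univ.filter (fun i : Fin m => (j : ℕ) < (i : ℕ) ∧ (i : ℕ) < m - 1),
            ‖z i‖ ^ 2 * ‖z j‖ ^ 2
              * (∑ k ∈ Finset.univ.filter (fun k : Fin m => (i : ℕ) < (k : ℕ)),
                  ((θ i) ^ 2 - (θ k) ^ 2) * ‖z k‖ ^ 2) ^ 2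
              / ((∑ t ∈ Finset.univ.filter (fun t : Fin m => (j : ℕ) < (t : ℕ)),
                    (θ t) ^ 2 * ‖z t‖ ^ 2)
                  * (∑ s ∈ Finset.univ.filter (fun s : Fin m => (j : ℕ) ≤ (s : ℕ)),
                      (θ s) ^ 2 * ‖z s‖ ^ 2)
                  * (∑ k ∈ Finset.univ.filter (fun k : Fin m => (i : ℕ) < (k : ℕ)), ‖z k‖ ^ 2)
                  * (∑ k ∈ Finset.univ.filter (fun k : Fin m => (i : ℕ) ≤ (k : ℕ)), ‖z k‖ ^ 2)))

section Aux
open Filter Finset Topology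

lemma rinner_sphX {m : ℕ} (θ : Fin m → ℝ) (z : Fin m → ℂ) :
    rinner (sphX θ z) (sphX θ z) = ∑ k : Fin m, θ k ^ 2 * ‖z k‖ ^ 2 := by
  unfold rinner sphX
  rw [Complex.re_sum]
  refine Finset.sum_congr rfl fun k _ => ?_
  rw [Complex.mul_conj]
  simp [Complex.normSq_mul, Complex.normSq_ofReal, Complex.normSq_eq_norm_sq]
  norm_cast
  rw [mul_pow, sq_abs]

-- helpers
lemma tendsto_div' {N D : ℝ → ℝ} {L : ℝ} (hN : Continuous N) (hD : Continuous D)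
    (hD0 : D 0 ≠ 0) (hL : N 0 / D 0 = L) :
    Tendsto (fun ε => N ε / D ε) (𝓝[>] (0:ℝ)) (𝓝 L) := by
  have h := ((hN.tendsto 0).div (hD.tendsto 0) hD0).mono_left
    (nhdsWithin_le_nhds (s := Set.Ioi (0:ℝ)))
  rwa [hL] at h

lemma tendsto_div_cancel {X Y : ℝ → ℝ} (N D : ℝ → ℝ) {L : ℝ} (n : ℕ)
    (hN : Continuous N) (hD : Continuous D) (hD0 : D 0 ≠ 0)
    (hX : ∀ ε : ℝ, X ε = ε ^ n * N ε) (hY : ∀ ε : ℝ, Y ε = ε ^ n * D ε)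
    (hL : N 0 / D 0 = L) :
    Tendsto (fun ε => X ε / Y ε) (𝓝[>] (0:ℝ)) (𝓝 L) := by
  refine (tendsto_div' hN hD hD0 hL).congr' ?_
  filter_upwards [self_mem_nhdsWithin] with ε (hε : ε ∈ Set.Ioi 0)
  rw [hX, hY, mul_div_mul_left _ _ (pow_ne_zero n (ne_of_gt hε))]

lemma sum_decomp {m : ℕ} {x : Fin m → ℝ} {eb ec : ℝ} {b : Fin m} {S : Finset (Fin m)}
    (hb : b ∈ S) (hxb : x b = eb) (hx : ∀ s ∈ S, s ≠ b → x s = ec) (f : Fin m → ℝ) :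
    ∑ s ∈ S, f s * x s = f b * eb + (∑ s ∈ S.erase b, f s) * ec := by
  rw [← Finset.add_sum_erase _ _ hb, hxb, Finset.sum_mul]
  congr 1
  refine Finset.sum_congr rfl fun s hs => ?_
  rw [hx s (Finset.mem_of_mem_erase hs) (Finset.ne_of_mem_erase hs)]

lemma sum_decomp_one {m : ℕ} {x : Fin m → ℝ} {eb ec : ℝ} {b : Fin m} {S : Finset (Fin m)}
    (hb : b ∈ S) (hxb : x b = eb) (hx : ∀ s ∈ S, s ≠ b → x s = ec) :
    ∑ s ∈ S, x s = eb + ((S.erase b).card : ℝ) * ec := by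
  have h := sum_decomp hb hxb hx (fun _ => 1)
  simpa [mul_comm] using h

lemma sum_decomp0 {m : ℕ} {x : Fin m → ℝ} {e0 eb ec : ℝ} {i0 b : Fin m} {S : Finset (Fin m)}
    (hi : i0 ∈ S) (hb : b ∈ S) (hib : b ≠ i0) (hx0 : x i0 = e0) (hxb : x b = eb)
    (hx : ∀ s ∈ S, s ≠ i0 → s ≠ b → x s = ec) (f : Fin m → ℝ) :
    ∑ s ∈ S, f s * x s
      = f i0 * e0 + (f b * eb + (∑ s ∈ (S.erase i0).erase b, f s) * ec) := by
  rw [← Finset.add_sum_erase _ _ hi, hx0]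
  congr 1
  exact sum_decomp (Finset.mem_erase.mpr ⟨hib, hb⟩) hxb
    (fun s hs hsb => hx s (Finset.mem_of_mem_erase hs) (Finset.ne_of_mem_erase hs) hsb) f

lemma sum_decomp0_one {m : ℕ} {x : Fin m → ℝ} {e0 eb ec : ℝ} {i0 b : Fin m} {S : Finset (Fin m)}
    (hi : i0 ∈ S) (hb : b ∈ S) (hib : b ≠ i0) (hx0 : x i0 = e0) (hxb : x b = eb)
    (hx : ∀ s ∈ S, s ≠ i0 → s ≠ b → x s = ec) :
    ∑ s ∈ S, x s = e0 + (eb + ((((S.erase i0).erase b).card : ℝ)) * ec) := by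
  have h := sum_decomp0 hi hb hib hx0 hxb hx (fun _ => 1)
  simpa [mul_comm] using h

noncomputable def xzf (m : ℕ) (ε : ℝ) : Fin m → ℝ := fun k =>
  if (k : ℕ) = 0 then 1 - ε - ((m : ℝ) - 2) * ε ^ 2
  else if (k : ℕ) = m - 1 then ε else ε ^ 2

noncomputable def xwf (m : ℕ) (ε : ℝ) : Fin m → ℝ := fun k =>
  if (k : ℕ) = m - 1 then 1 - ((m : ℝ) - 1) * ε else ε

noncomputable def Fx {m : ℕ} (θ : Fin m → ℝ) (a b : Fin m) (x : Fin m → ℝ) : ℝ :=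
  (2 / ∑ k : Fin m, θ k ^ 2 * x k) *
    ((θ a) ^ 2 * (θ b) ^ 2 * (x a + x b)
        / ((θ a) ^ 2 * x a + (θ b) ^ 2 * x b)
      + (∑ j ∈ Finset.univ.filter (fun j : Fin m => (j : ℕ) < m - 2),
          (θ j) ^ 2
            * (∑ s ∈ Finset.univ.filter (fun s : Fin m => (j : ℕ) < (s : ℕ)),
                (θ s) ^ 2 * x s)
            * (∑ k ∈ Finset.univ.filter (fun k : Fin m => (j : ℕ) ≤ (k : ℕ)), x k)
            / ((∑ s ∈ Finset.univ.filter (fun s : Fin m => (j : ℕ) ≤ (s : ℕ)),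
                  (θ s) ^ 2 * x s)
                * (∑ k ∈ Finset.univ.filter (fun k : Fin m => (j : ℕ) < (k : ℕ)), x k)))
      + ∑ j ∈ Finset.univ.filter (fun j : Fin m => (j : ℕ) < m - 2),
          ∑ i ∈ Finset.univ.filter (fun i : Fin m => (j : ℕ) < (i : ℕ) ∧ (i : ℕ) < m - 1),
            x i * x j
              * (∑ k ∈ Finset.univ.filter (fun k : Fin m => (i : ℕ) < (k : ℕ)),
                  ((θ i) ^ 2 - (θ k) ^ 2) * x k) ^ 2
              / ((∑ t ∈ Finset.univ.filter (fun t : Fin m => (j : ℕ) < (t : ℕ)),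
                    (θ t) ^ 2 * x t)
                  * (∑ s ∈ Finset.univ.filter (fun s : Fin m => (j : ℕ) ≤ (s : ℕ)),
                      (θ s) ^ 2 * x s)
                  * (∑ k ∈ Finset.univ.filter (fun k : Fin m => (i : ℕ) < (k : ℕ)), x k)
                  * (∑ k ∈ Finset.univ.filter (fun k : Fin m => (i : ℕ) ≤ (k : ℕ)), x k)))

lemma Tsplit' {m : ℕ} (hm : 2 ≤ m) (θ : Fin m → ℝ) (a b : Fin m)
    (ha : (a : ℕ) = m - 2) (hb : (b : ℕ) = m - 1) :
    ∑ k : Fin m, θ k ^ 2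
      = (∑ j ∈ Finset.univ.filter (fun j : Fin m => (j : ℕ) < m - 2), θ j ^ 2)
        + (θ a ^ 2 + θ b ^ 2) := by
  rw [← Finset.sum_filter_add_sum_filter_not Finset.univ (fun j : Fin m => (j : ℕ) < m - 2)]
  congr 1
  have h : Finset.univ.filter (fun j : Fin m => ¬ (j : ℕ) < m - 2) = {a, b} := by
    ext j
    simp only [Finset.mem_filter, Finset.mem_univ, true_and, Finset.mem_insert,
      Finset.mem_singleton, Fin.ext_iff, ha, hb]
    have := j.isLt
    omega
  rw [h, Finset.sum_pair (by simp [Fin.ext_iff, ha, hb]; omega)]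

lemma tendsto_w (m : ℕ) (hm : 2 ≤ m) (θ : Fin m → ℝ) (hθ : ∀ k, 1 ≤ θ k)
    (a b : Fin m) (ha : (a : ℕ) = m - 2) (hb : (b : ℕ) = m - 1) :
    Filter.Tendsto (fun ε => Fx θ a b (xwf m ε)) (𝓝[>] (0:ℝ))
      (𝓝 ((2 / θ b ^ 2) * ((∑ k : Fin m, θ k ^ 2) - θ b ^ 2))) := by
  have hbne : θ b ^ 2 ≠ 0 := by nlinarith [hθ b]
  have hxwb : ∀ ε : ℝ, xwf m ε b = 1 - ((m : ℝ) - 1) * ε := by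
    intro ε; simp [xwf, hb]
  have hxwo : ∀ (ε : ℝ) (s : Fin m), s ≠ b → xwf m ε s = ε := by
    intro ε s hs
    simp only [xwf]
    rw [if_neg (fun h => hs (Fin.ext (h.trans hb.symm)))]
  have hsum : ∀ (S : Finset (Fin m)), b ∈ S → ∀ (f : Fin m → ℝ) (ε : ℝ),
      ∑ s ∈ S, f s * xwf m ε s
        = f b * (1 - ((m : ℝ) - 1) * ε) + (∑ s ∈ S.erase b, f s) * ε :=
    fun S hbS f ε => sum_decomp hbS (hxwb ε) (fun s _ hs => hxwo ε s hs) f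
  have hsum1 : ∀ (S : Finset (Fin m)), b ∈ S → ∀ ε : ℝ,
      ∑ s ∈ S, xwf m ε s
        = (1 - ((m : ℝ) - 1) * ε) + ((S.erase b).card : ℝ) * ε :=
    fun S hbS ε => sum_decomp_one hbS (hxwb ε) (fun s _ hs => hxwo ε s hs)
  -- prefactor
  have hpre : Filter.Tendsto (fun ε => 2 / ∑ k : Fin m, θ k ^ 2 * xwf m ε k)
      (𝓝[>] (0:ℝ)) (𝓝 (2 / θ b ^ 2)) := by
    have he : ∀ ε : ℝ, ∑ k : Fin m, θ k ^ 2 * xwf m ε k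
        = θ b ^ 2 * (1 - ((m : ℝ) - 1) * ε) + (∑ s ∈ Finset.univ.erase b, θ s ^ 2) * ε :=
      fun ε => hsum Finset.univ (Finset.mem_univ b) _ ε
    simp only [he]
    exact tendsto_div' continuous_const (by fun_prop) (by simpa using hbne) (by norm_num)
  -- A term
  have hanb : a ≠ b := by
    intro h; rw [Fin.ext_iff, ha, hb] at h; omega
  have hxa : ∀ ε : ℝ, xwf m ε a = ε := fun ε => hxwo ε a hanb
  have hA : Filter.Tendsto
      (fun ε => θ a ^ 2 * θ b ^ 2 * (xwf m ε a + xwf m ε b)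
        / (θ a ^ 2 * xwf m ε a + θ b ^ 2 * xwf m ε b)) (𝓝[>] (0:ℝ)) (𝓝 (θ a ^ 2)) := by
    simp only [hxa, hxwb]
    refine tendsto_div' (by fun_prop) (by fun_prop) (by simpa using hbne) ?_
    norm_num
    rw [mul_div_assoc, div_self hbne, mul_one]
  -- B sum
  have hB : Filter.Tendsto
      (fun ε => ∑ j ∈ Finset.univ.filter (fun j : Fin m => (j : ℕ) < m - 2),
          (θ j) ^ 2
            * (∑ s ∈ Finset.univ.filter (fun s : Fin m => (j : ℕ) < (s : ℕ)),
                (θ s) ^ 2 * xwf m ε s)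
            * (∑ k ∈ Finset.univ.filter (fun k : Fin m => (j : ℕ) ≤ (k : ℕ)), xwf m ε k)
            / ((∑ s ∈ Finset.univ.filter (fun s : Fin m => (j : ℕ) ≤ (s : ℕ)),
                  (θ s) ^ 2 * xwf m ε s)
                * (∑ k ∈ Finset.univ.filter (fun k : Fin m => (j : ℕ) < (k : ℕ)), xwf m ε k)))
      (𝓝[>] (0:ℝ))
      (𝓝 (∑ j ∈ Finset.univ.filter (fun j : Fin m => (j : ℕ) < m - 2), θ j ^ 2)) := by
    refine tendsto_finset_sum _ (fun j hj => ?_)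
    have hjlt : (j : ℕ) < m - 2 := by simpa using hj
    have hbgt : b ∈ Finset.univ.filter (fun s : Fin m => (j : ℕ) < (s : ℕ)) := by
      simp [hb]; omega
    have hbge : b ∈ Finset.univ.filter (fun s : Fin m => (j : ℕ) ≤ (s : ℕ)) := by
      simp [hb]; omega
    have e1 : ∀ ε : ℝ, (∑ s ∈ Finset.univ.filter (fun s : Fin m => (j : ℕ) < (s : ℕ)),
        (θ s) ^ 2 * xwf m ε s)
        = θ b ^ 2 * (1 - ((m : ℝ) - 1) * ε)
          + (∑ s ∈ (Finset.univ.filter (fun s : Fin m => (j : ℕ) < (s : ℕ))).erase b,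
              θ s ^ 2) * ε := fun ε => hsum _ hbgt _ ε
    have e2 : ∀ ε : ℝ, (∑ s ∈ Finset.univ.filter (fun s : Fin m => (j : ℕ) ≤ (s : ℕ)),
        (θ s) ^ 2 * xwf m ε s)
        = θ b ^ 2 * (1 - ((m : ℝ) - 1) * ε)
          + (∑ s ∈ (Finset.univ.filter (fun s : Fin m => (j : ℕ) ≤ (s : ℕ))).erase b,
              θ s ^ 2) * ε := fun ε => hsum _ hbge _ ε
    have e3 : ∀ ε : ℝ, (∑ k ∈ Finset.univ.filter (fun k : Fin m => (j : ℕ) < (k : ℕ)),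
        xwf m ε k)
        = (1 - ((m : ℝ) - 1) * ε)
          + (((Finset.univ.filter (fun k : Fin m => (j : ℕ) < (k : ℕ))).erase b).card : ℝ)
            * ε := fun ε => hsum1 _ hbgt ε
    have e4 : ∀ ε : ℝ, (∑ k ∈ Finset.univ.filter (fun k : Fin m => (j : ℕ) ≤ (k : ℕ)),
        xwf m ε k)
        = (1 - ((m : ℝ) - 1) * ε)
          + (((Finset.univ.filter (fun k : Fin m => (j : ℕ) ≤ (k : ℕ))).erase b).card : ℝ)
            * ε := fun ε => hsum1 _ hbge ε
    simp only [e1, e2, e3, e4]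
    refine tendsto_div' (by fun_prop) (by fun_prop) (by norm_num [hbne]) ?_
    norm_num
    field_simp
    exact mul_div_cancel_right₀ _ (fun h => hbne (by simp [h]))
  -- C sum
  have hC : Filter.Tendsto
      (fun ε => ∑ j ∈ Finset.univ.filter (fun j : Fin m => (j : ℕ) < m - 2),
          ∑ i ∈ Finset.univ.filter (fun i : Fin m => (j : ℕ) < (i : ℕ) ∧ (i : ℕ) < m - 1),
            xwf m ε i * xwf m ε j
              * (∑ k ∈ Finset.univ.filter (fun k : Fin m => (i : ℕ) < (k : ℕ)),
                  ((θ i) ^ 2 - (θ k) ^ 2) * xwf m ε k) ^ 2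
              / ((∑ t ∈ Finset.univ.filter (fun t : Fin m => (j : ℕ) < (t : ℕ)),
                    (θ t) ^ 2 * xwf m ε t)
                  * (∑ s ∈ Finset.univ.filter (fun s : Fin m => (j : ℕ) ≤ (s : ℕ)),
                      (θ s) ^ 2 * xwf m ε s)
                  * (∑ k ∈ Finset.univ.filter (fun k : Fin m => (i : ℕ) < (k : ℕ)), xwf m ε k)
                  * (∑ k ∈ Finset.univ.filter (fun k : Fin m => (i : ℕ) ≤ (k : ℕ)), xwf m ε k)))
      (𝓝[>] (0:ℝ)) (𝓝 0) := by
    have h : Filter.Tendsto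
        (fun ε => ∑ j ∈ Finset.univ.filter (fun j : Fin m => (j : ℕ) < m - 2),
          ∑ i ∈ Finset.univ.filter (fun i : Fin m => (j : ℕ) < (i : ℕ) ∧ (i : ℕ) < m - 1),
            xwf m ε i * xwf m ε j
              * (∑ k ∈ Finset.univ.filter (fun k : Fin m => (i : ℕ) < (k : ℕ)),
                  ((θ i) ^ 2 - (θ k) ^ 2) * xwf m ε k) ^ 2
              / ((∑ t ∈ Finset.univ.filter (fun t : Fin m => (j : ℕ) < (t : ℕ)),
                    (θ t) ^ 2 * xwf m ε t)
                  * (∑ s ∈ Finset.univ.filter (fun s : Fin m => (j : ℕ) ≤ (s : ℕ)),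
                      (θ s) ^ 2 * xwf m ε s)
                  * (∑ k ∈ Finset.univ.filter (fun k : Fin m => (i : ℕ) < (k : ℕ)), xwf m ε k)
                  * (∑ k ∈ Finset.univ.filter (fun k : Fin m => (i : ℕ) ≤ (k : ℕ)), xwf m ε k)))
        (𝓝[>] (0:ℝ))
        (𝓝 (∑ j ∈ Finset.univ.filter (fun j : Fin m => (j : ℕ) < m - 2),
          ∑ _i ∈ Finset.univ.filter (fun i : Fin m => (j : ℕ) < (i : ℕ) ∧ (i : ℕ) < m - 1),
            (0:ℝ))) := by
      refine tendsto_finset_sum _ (fun j hj => ?_)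
      have hjlt : (j : ℕ) < m - 2 := by simpa using hj
      refine tendsto_finset_sum _ (fun i hi => ?_)
      have hilt : (j : ℕ) < (i : ℕ) ∧ (i : ℕ) < m - 1 := by simpa using hi
      have hbgt : b ∈ Finset.univ.filter (fun s : Fin m => (j : ℕ) < (s : ℕ)) := by
        simp [hb]; omega
      have hbge : b ∈ Finset.univ.filter (fun s : Fin m => (j : ℕ) ≤ (s : ℕ)) := by
        simp [hb]; omega
      have hbgti : b ∈ Finset.univ.filter (fun s : Fin m => (i : ℕ) < (s : ℕ)) := by
        simp [hb]; omega
      have hbgei : b ∈ Finset.univ.filter (fun s : Fin m => (i : ℕ) ≤ (s : ℕ)) := by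
        simp [hb]; omega
      have hxi : ∀ ε : ℝ, xwf m ε i = ε := fun ε => hxwo ε i (by
        intro h; rw [Fin.ext_iff, hb] at h; omega)
      have hxj : ∀ ε : ℝ, xwf m ε j = ε := fun ε => hxwo ε j (by
        intro h; rw [Fin.ext_iff, hb] at h; omega)
      have e1 : ∀ ε : ℝ, (∑ t ∈ Finset.univ.filter (fun t : Fin m => (j : ℕ) < (t : ℕ)),
          (θ t) ^ 2 * xwf m ε t)
          = θ b ^ 2 * (1 - ((m : ℝ) - 1) * ε)
            + (∑ s ∈ (Finset.univ.filter (fun t : Fin m => (j : ℕ) < (t : ℕ))).erase b,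
                θ s ^ 2) * ε := fun ε => hsum _ hbgt _ ε
      have e2 : ∀ ε : ℝ, (∑ s ∈ Finset.univ.filter (fun s : Fin m => (j : ℕ) ≤ (s : ℕ)),
          (θ s) ^ 2 * xwf m ε s)
          = θ b ^ 2 * (1 - ((m : ℝ) - 1) * ε)
            + (∑ s ∈ (Finset.univ.filter (fun s : Fin m => (j : ℕ) ≤ (s : ℕ))).erase b,
                θ s ^ 2) * ε := fun ε => hsum _ hbge _ ε
      have e3 : ∀ ε : ℝ, (∑ k ∈ Finset.univ.filter (fun k : Fin m => (i : ℕ) < (k : ℕ)),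
          xwf m ε k)
          = (1 - ((m : ℝ) - 1) * ε)
            + (((Finset.univ.filter (fun k : Fin m => (i : ℕ) < (k : ℕ))).erase b).card : ℝ)
              * ε := fun ε => hsum1 _ hbgti ε
      have e4 : ∀ ε : ℝ, (∑ k ∈ Finset.univ.filter (fun k : Fin m => (i : ℕ) ≤ (k : ℕ)),
          xwf m ε k)
          = (1 - ((m : ℝ) - 1) * ε)
            + (((Finset.univ.filter (fun k : Fin m => (i : ℕ) ≤ (k : ℕ))).erase b).card : ℝ)
              * ε := fun ε => hsum1 _ hbgei ε
      have e5 : ∀ ε : ℝ, (∑ k ∈ Finset.univ.filter (fun k : Fin m => (i : ℕ) < (k : ℕ)),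
          ((θ i) ^ 2 - (θ k) ^ 2) * xwf m ε k)
          = (θ i ^ 2 - θ b ^ 2) * (1 - ((m : ℝ) - 1) * ε)
            + (∑ s ∈ (Finset.univ.filter (fun k : Fin m => (i : ℕ) < (k : ℕ))).erase b,
                (θ i ^ 2 - θ s ^ 2)) * ε := fun ε => hsum _ hbgti _ ε
      simp only [hxi, hxj, e1, e2, e3, e4, e5]
      refine tendsto_div' (by fun_prop) (by fun_prop) (by norm_num [hbne]) ?_
      norm_num
    simpa using h
  -- combine
  have H := hpre.mul ((hA.add hB).add hC)
  have hval : (2 / θ b ^ 2) * ((∑ k : Fin m, θ k ^ 2) - θ b ^ 2)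
      = (2 / θ b ^ 2) * ((θ a ^ 2
          + ∑ j ∈ Finset.univ.filter (fun j : Fin m => (j : ℕ) < m - 2), θ j ^ 2) + 0) := by
    rw [Tsplit' hm θ a b ha hb]; ring
  rw [hval]
  simp only [Fx]
  exact H

lemma tendsto_z (m : ℕ) (hm : 2 ≤ m) (θ : Fin m → ℝ) (hθ : ∀ k, 1 ≤ θ k)
    (a b c : Fin m) (ha : (a : ℕ) = m - 2) (hb : (b : ℕ) = m - 1) (hc : (c : ℕ) = 0)
    (hθc : θ c = 1) :
    Filter.Tendsto (fun ε => Fx θ a b (xzf m ε)) (𝓝[>] (0:ℝ))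
      (𝓝 (2 * ((∑ k : Fin m, θ k ^ 2) - 1))) := by
  have hbne : θ b ^ 2 ≠ 0 := by nlinarith [hθ b]
  have hbc : b ≠ c := by intro h; rw [Fin.ext_iff, hb, hc] at h; omega
  have hxzc : ∀ ε : ℝ, xzf m ε c = 1 - ε - ((m : ℝ) - 2) * ε ^ 2 := by
    intro ε; simp [xzf, hc]
  have hxzb : ∀ ε : ℝ, xzf m ε b = ε := by
    intro ε; simp only [xzf, hb]; rw [if_neg (by omega)]; simp
  have hxzo : ∀ (ε : ℝ) (s : Fin m), s ≠ c → s ≠ b → xzf m ε s = ε ^ 2 := by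
    intro ε s hsc hsb
    simp only [xzf]
    rw [if_neg (fun h => hsc (Fin.ext (h.trans hc.symm))),
      if_neg (fun h => hsb (Fin.ext (h.trans hb.symm)))]
  have hsum : ∀ (S : Finset (Fin m)), b ∈ S → c ∉ S → ∀ (f : Fin m → ℝ) (ε : ℝ),
      ∑ s ∈ S, f s * xzf m ε s = f b * ε + (∑ s ∈ S.erase b, f s) * ε ^ 2 :=
    fun S hbS hcS f ε => sum_decomp hbS (hxzb ε)
      (fun s hs hsb => hxzo ε s (fun h => hcS (h ▸ hs)) hsb) f
  have hsum1 : ∀ (S : Finset (Fin m)), b ∈ S → c ∉ S → ∀ ε : ℝ,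
      ∑ s ∈ S, xzf m ε s = ε + ((S.erase b).card : ℝ) * ε ^ 2 :=
    fun S hbS hcS ε => sum_decomp_one hbS (hxzb ε)
      (fun s hs hsb => hxzo ε s (fun h => hcS (h ▸ hs)) hsb)
  have hsum0 : ∀ (S : Finset (Fin m)), c ∈ S → b ∈ S → ∀ (f : Fin m → ℝ) (ε : ℝ),
      ∑ s ∈ S, f s * xzf m ε s
        = f c * (1 - ε - ((m : ℝ) - 2) * ε ^ 2)
          + (f b * ε + (∑ s ∈ (S.erase c).erase b, f s) * ε ^ 2) :=
    fun S hcS hbS f ε => sum_decomp0 hcS hbS hbc (hxzc ε) (hxzb ε)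
      (fun s _ hsc hsb => hxzo ε s hsc hsb) f
  have hsum0_1 : ∀ (S : Finset (Fin m)), c ∈ S → b ∈ S → ∀ ε : ℝ,
      ∑ s ∈ S, xzf m ε s
        = (1 - ε - ((m : ℝ) - 2) * ε ^ 2)
          + (ε + ((((S.erase c).erase b).card : ℝ)) * ε ^ 2) :=
    fun S hcS hbS ε => sum_decomp0_one hcS hbS hbc (hxzc ε) (hxzb ε)
      (fun s _ hsc hsb => hxzo ε s hsc hsb)
  -- prefactor
  have hpre : Filter.Tendsto (fun ε => 2 / ∑ k : Fin m, θ k ^ 2 * xzf m ε k)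
      (𝓝[>] (0:ℝ)) (𝓝 2) := by
    have he : ∀ ε : ℝ, ∑ k : Fin m, θ k ^ 2 * xzf m ε k
        = θ c ^ 2 * (1 - ε - ((m : ℝ) - 2) * ε ^ 2)
          + (θ b ^ 2 * ε + (∑ s ∈ (Finset.univ.erase c).erase b, θ s ^ 2) * ε ^ 2) :=
      fun ε => hsum0 Finset.univ (Finset.mem_univ c) (Finset.mem_univ b) _ ε
    simp only [he]
    exact tendsto_div' continuous_const (by fun_prop) (by norm_num [hθc])
      (by norm_num [hθc])
  -- A term
  have hA : Filter.Tendsto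
      (fun ε => θ a ^ 2 * θ b ^ 2 * (xzf m ε a + xzf m ε b)
        / (θ a ^ 2 * xzf m ε a + θ b ^ 2 * xzf m ε b)) (𝓝[>] (0:ℝ))
      (𝓝 (if m = 2 then θ b ^ 2 else θ a ^ 2)) := by
    by_cases hm2 : m = 2
    · rw [if_pos hm2]
      have hac : a = c := by rw [Fin.ext_iff, ha, hc]; omega
      simp only [hac, hxzc, hxzb]
      refine tendsto_div' (by fun_prop) (by fun_prop) (by norm_num [hθc, hac]) ?_
      norm_num [hθc, hac]
    · rw [if_neg hm2]
      have hanb : a ≠ b := by intro h; rw [Fin.ext_iff, ha, hb] at h; omega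
      have hanc : a ≠ c := by intro h; rw [Fin.ext_iff, ha, hc] at h; omega
      have hxa : ∀ ε : ℝ, xzf m ε a = ε ^ 2 := fun ε => hxzo ε a hanc hanb
      simp only [hxa, hxzb]
      refine tendsto_div_cancel (fun ε => θ a ^ 2 * θ b ^ 2 * (ε + 1))
        (fun ε => θ a ^ 2 * ε + θ b ^ 2) 1 (by fun_prop) (by fun_prop)
        (by simpa using hbne) (fun ε => by ring) (fun ε => by ring) ?_
      norm_num
      rw [mul_div_assoc, div_self hbne, mul_one]
  -- B sum
  have hB : Filter.Tendsto
      (fun ε => ∑ j ∈ Finset.univ.filter (fun j : Fin m => (j : ℕ) < m - 2),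
          (θ j) ^ 2
            * (∑ s ∈ Finset.univ.filter (fun s : Fin m => (j : ℕ) < (s : ℕ)),
                (θ s) ^ 2 * xzf m ε s)
            * (∑ k ∈ Finset.univ.filter (fun k : Fin m => (j : ℕ) ≤ (k : ℕ)), xzf m ε k)
            / ((∑ s ∈ Finset.univ.filter (fun s : Fin m => (j : ℕ) ≤ (s : ℕ)),
                  (θ s) ^ 2 * xzf m ε s)
                * (∑ k ∈ Finset.univ.filter (fun k : Fin m => (j : ℕ) < (k : ℕ)), xzf m ε k)))
      (𝓝[>] (0:ℝ))
      (𝓝 (∑ j ∈ Finset.univ.filter (fun j : Fin m => (j : ℕ) < m - 2),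
          (if j = c then θ b ^ 2 else θ j ^ 2))) := by
    refine tendsto_finset_sum _ (fun j hj => ?_)
    have hjlt : (j : ℕ) < m - 2 := by simpa using hj
    have hbgt : b ∈ Finset.univ.filter (fun s : Fin m => (j : ℕ) < (s : ℕ)) := by
      simp [hb]; omega
    have hcgt : c ∉ Finset.univ.filter (fun s : Fin m => (j : ℕ) < (s : ℕ)) := by
      simp only [Finset.mem_filter, Finset.mem_univ, true_and, hc]; omega
    have hbge : b ∈ Finset.univ.filter (fun s : Fin m => (j : ℕ) ≤ (s : ℕ)) := by
      simp [hb]; omega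
    have e1 : ∀ ε : ℝ, (∑ s ∈ Finset.univ.filter (fun s : Fin m => (j : ℕ) < (s : ℕ)),
        (θ s) ^ 2 * xzf m ε s)
        = θ b ^ 2 * ε
          + (∑ s ∈ (Finset.univ.filter (fun s : Fin m => (j : ℕ) < (s : ℕ))).erase b,
              θ s ^ 2) * ε ^ 2 := fun ε => hsum _ hbgt hcgt _ ε
    have e3 : ∀ ε : ℝ, (∑ k ∈ Finset.univ.filter (fun k : Fin m => (j : ℕ) < (k : ℕ)),
        xzf m ε k)
        = ε + (((Finset.univ.filter (fun k : Fin m => (j : ℕ) < (k : ℕ))).erase b).card : ℝ)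
            * ε ^ 2 := fun ε => hsum1 _ hbgt hcgt ε
    by_cases hjc : j = c
    · subst hjc
      rw [if_pos rfl]
      have hcge : j ∈ Finset.univ.filter (fun s : Fin m => (j : ℕ) ≤ (s : ℕ)) := by simp
      have e2 : ∀ ε : ℝ, (∑ s ∈ Finset.univ.filter (fun s : Fin m => (j : ℕ) ≤ (s : ℕ)),
          (θ s) ^ 2 * xzf m ε s)
          = θ j ^ 2 * (1 - ε - ((m : ℝ) - 2) * ε ^ 2)
            + (θ b ^ 2 * ε
              + (∑ s ∈ ((Finset.univ.filter
                  (fun s : Fin m => (j : ℕ) ≤ (s : ℕ))).erase j).erase b,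
                  θ s ^ 2) * ε ^ 2) := fun ε => hsum0 _ hcge hbge _ ε
      have e4 : ∀ ε : ℝ, (∑ k ∈ Finset.univ.filter (fun k : Fin m => (j : ℕ) ≤ (k : ℕ)),
          xzf m ε k)
          = (1 - ε - ((m : ℝ) - 2) * ε ^ 2)
            + (ε + ((((Finset.univ.filter
                (fun k : Fin m => (j : ℕ) ≤ (k : ℕ))).erase j).erase b).card : ℝ) * ε ^ 2) :=
        fun ε => hsum0_1 _ hcge hbge ε
      simp only [e1, e2, e3, e4]
      refine tendsto_div_cancel
        (fun ε => θ j ^ 2 * (θ b ^ 2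
            + (∑ s ∈ (Finset.univ.filter (fun s : Fin m => (j : ℕ) < (s : ℕ))).erase b,
                θ s ^ 2) * ε)
          * ((1 - ε - ((m : ℝ) - 2) * ε ^ 2)
            + (ε + ((((Finset.univ.filter
                (fun k : Fin m => (j : ℕ) ≤ (k : ℕ))).erase j).erase b).card : ℝ) * ε ^ 2)))
        (fun ε => (θ j ^ 2 * (1 - ε - ((m : ℝ) - 2) * ε ^ 2)
            + (θ b ^ 2 * ε
              + (∑ s ∈ ((Finset.univ.filter
                  (fun s : Fin m => (j : ℕ) ≤ (s : ℕ))).erase j).erase b,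
                  θ s ^ 2) * ε ^ 2))
          * (1 + (((Finset.univ.filter
              (fun k : Fin m => (j : ℕ) < (k : ℕ))).erase b).card : ℝ) * ε))
        1 (by fun_prop) (by fun_prop) (by norm_num [hθc]) (fun ε => by ring)
        (fun ε => by ring) ?_
      norm_num [hθc]
    · rw [if_neg hjc]
      have hj0 : (j : ℕ) ≠ 0 := fun h => hjc (Fin.ext (h.trans hc.symm))
      have hcge : c ∉ Finset.univ.filter (fun s : Fin m => (j : ℕ) ≤ (s : ℕ)) := by
        simp only [Finset.mem_filter, Finset.mem_univ, true_and, hc]; omega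
      have e2 : ∀ ε : ℝ, (∑ s ∈ Finset.univ.filter (fun s : Fin m => (j : ℕ) ≤ (s : ℕ)),
          (θ s) ^ 2 * xzf m ε s)
          = θ b ^ 2 * ε
            + (∑ s ∈ (Finset.univ.filter (fun s : Fin m => (j : ℕ) ≤ (s : ℕ))).erase b,
                θ s ^ 2) * ε ^ 2 := fun ε => hsum _ hbge hcge _ ε
      have e4 : ∀ ε : ℝ, (∑ k ∈ Finset.univ.filter (fun k : Fin m => (j : ℕ) ≤ (k : ℕ)),
          xzf m ε k)
          = ε + (((Finset.univ.filter
              (fun k : Fin m => (j : ℕ) ≤ (k : ℕ))).erase b).card : ℝ) * ε ^ 2 :=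
        fun ε => hsum1 _ hbge hcge ε
      simp only [e1, e2, e3, e4]
      refine tendsto_div_cancel
        (fun ε => θ j ^ 2 * (θ b ^ 2
            + (∑ s ∈ (Finset.univ.filter (fun s : Fin m => (j : ℕ) < (s : ℕ))).erase b,
                θ s ^ 2) * ε)
          * (1 + (((Finset.univ.filter
              (fun k : Fin m => (j : ℕ) ≤ (k : ℕ))).erase b).card : ℝ) * ε))
        (fun ε => (θ b ^ 2
            + (∑ s ∈ (Finset.univ.filter (fun s : Fin m => (j : ℕ) ≤ (s : ℕ))).erase b,
                θ s ^ 2) * ε)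
          * (1 + (((Finset.univ.filter
              (fun k : Fin m => (j : ℕ) < (k : ℕ))).erase b).card : ℝ) * ε))
        2 (by fun_prop) (by fun_prop) (by norm_num [hbne]) (fun ε => by ring)
        (fun ε => by ring) ?_
      norm_num
      field_simp
      exact mul_div_cancel_right₀ _ (fun h => hbne (by simp [h]))
  -- C sum
  have hC : Filter.Tendsto
      (fun ε => ∑ j ∈ Finset.univ.filter (fun j : Fin m => (j : ℕ) < m - 2),
          ∑ i ∈ Finset.univ.filter (fun i : Fin m => (j : ℕ) < (i : ℕ) ∧ (i : ℕ) < m - 1),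
            xzf m ε i * xzf m ε j
              * (∑ k ∈ Finset.univ.filter (fun k : Fin m => (i : ℕ) < (k : ℕ)),
                  ((θ i) ^ 2 - (θ k) ^ 2) * xzf m ε k) ^ 2
              / ((∑ t ∈ Finset.univ.filter (fun t : Fin m => (j : ℕ) < (t : ℕ)),
                    (θ t) ^ 2 * xzf m ε t)
                  * (∑ s ∈ Finset.univ.filter (fun s : Fin m => (j : ℕ) ≤ (s : ℕ)),
                      (θ s) ^ 2 * xzf m ε s)
                  * (∑ k ∈ Finset.univ.filter (fun k : Fin m => (i : ℕ) < (k : ℕ)), xzf m ε k)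
                  * (∑ k ∈ Finset.univ.filter (fun k : Fin m => (i : ℕ) ≤ (k : ℕ)), xzf m ε k)))
      (𝓝[>] (0:ℝ)) (𝓝 0) := by
    have h : Filter.Tendsto
        (fun ε => ∑ j ∈ Finset.univ.filter (fun j : Fin m => (j : ℕ) < m - 2),
          ∑ i ∈ Finset.univ.filter (fun i : Fin m => (j : ℕ) < (i : ℕ) ∧ (i : ℕ) < m - 1),
            xzf m ε i * xzf m ε j
              * (∑ k ∈ Finset.univ.filter (fun k : Fin m => (i : ℕ) < (k : ℕ)),
                  ((θ i) ^ 2 - (θ k) ^ 2) * xzf m ε k) ^ 2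
              / ((∑ t ∈ Finset.univ.filter (fun t : Fin m => (j : ℕ) < (t : ℕ)),
                    (θ t) ^ 2 * xzf m ε t)
                  * (∑ s ∈ Finset.univ.filter (fun s : Fin m => (j : ℕ) ≤ (s : ℕ)),
                      (θ s) ^ 2 * xzf m ε s)
                  * (∑ k ∈ Finset.univ.filter (fun k : Fin m => (i : ℕ) < (k : ℕ)), xzf m ε k)
                  * (∑ k ∈ Finset.univ.filter (fun k : Fin m => (i : ℕ) ≤ (k : ℕ)), xzf m ε k)))
        (𝓝[>] (0:ℝ))
        (𝓝 (∑ j ∈ Finset.univ.filter (fun j : Fin m => (j : ℕ) < m - 2),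
          ∑ _i ∈ Finset.univ.filter (fun i : Fin m => (j : ℕ) < (i : ℕ) ∧ (i : ℕ) < m - 1),
            (0:ℝ))) := by
      refine tendsto_finset_sum _ (fun j hj => ?_)
      have hjlt : (j : ℕ) < m - 2 := by simpa using hj
      refine tendsto_finset_sum _ (fun i hi => ?_)
      have hilt : (j : ℕ) < (i : ℕ) ∧ (i : ℕ) < m - 1 := by simpa using hi
      have hbgt : b ∈ Finset.univ.filter (fun s : Fin m => (j : ℕ) < (s : ℕ)) := by
        simp [hb]; omega
      have hcgt : c ∉ Finset.univ.filter (fun s : Fin m => (j : ℕ) < (s : ℕ)) := by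
        simp only [Finset.mem_filter, Finset.mem_univ, true_and, hc]; omega
      have hbge : b ∈ Finset.univ.filter (fun s : Fin m => (j : ℕ) ≤ (s : ℕ)) := by
        simp [hb]; omega
      have hbgti : b ∈ Finset.univ.filter (fun s : Fin m => (i : ℕ) < (s : ℕ)) := by
        simp [hb]; omega
      have hcgti : c ∉ Finset.univ.filter (fun s : Fin m => (i : ℕ) < (s : ℕ)) := by
        simp only [Finset.mem_filter, Finset.mem_univ, true_and, hc]; omega
      have hbgei : b ∈ Finset.univ.filter (fun s : Fin m => (i : ℕ) ≤ (s : ℕ)) := by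
        simp [hb]; omega
      have hcgei : c ∉ Finset.univ.filter (fun s : Fin m => (i : ℕ) ≤ (s : ℕ)) := by
        simp only [Finset.mem_filter, Finset.mem_univ, true_and, hc]; omega
      have hinc : i ≠ c := fun h => by rw [h, hc] at hilt; omega
      have hinb : i ≠ b := fun h => by rw [h, hb] at hilt; omega
      have hxi : ∀ ε : ℝ, xzf m ε i = ε ^ 2 := fun ε => hxzo ε i hinc hinb
      have e1 : ∀ ε : ℝ, (∑ t ∈ Finset.univ.filter (fun t : Fin m => (j : ℕ) < (t : ℕ)),
          (θ t) ^ 2 * xzf m ε t)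
          = θ b ^ 2 * ε
            + (∑ s ∈ (Finset.univ.filter (fun t : Fin m => (j : ℕ) < (t : ℕ))).erase b,
                θ s ^ 2) * ε ^ 2 := fun ε => hsum _ hbgt hcgt _ ε
      have e3 : ∀ ε : ℝ, (∑ k ∈ Finset.univ.filter (fun k : Fin m => (i : ℕ) < (k : ℕ)),
          xzf m ε k)
          = ε + (((Finset.univ.filter (fun k : Fin m => (i : ℕ) < (k : ℕ))).erase b).card : ℝ)
              * ε ^ 2 := fun ε => hsum1 _ hbgti hcgti ε
      have e4 : ∀ ε : ℝ, (∑ k ∈ Finset.univ.filter (fun k : Fin m => (i : ℕ) ≤ (k : ℕ)),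
          xzf m ε k)
          = ε + (((Finset.univ.filter (fun k : Fin m => (i : ℕ) ≤ (k : ℕ))).erase b).card : ℝ)
              * ε ^ 2 := fun ε => hsum1 _ hbgei hcgei ε
      have e5 : ∀ ε : ℝ, (∑ k ∈ Finset.univ.filter (fun k : Fin m => (i : ℕ) < (k : ℕ)),
          ((θ i) ^ 2 - (θ k) ^ 2) * xzf m ε k)
          = (θ i ^ 2 - θ b ^ 2) * ε
            + (∑ s ∈ (Finset.univ.filter (fun k : Fin m => (i : ℕ) < (k : ℕ))).erase b,
                (θ i ^ 2 - θ s ^ 2)) * ε ^ 2 := fun ε => hsum _ hbgti hcgti _ ε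
      by_cases hjc : j = c
      · subst hjc
        have hcge : j ∈ Finset.univ.filter (fun s : Fin m => (j : ℕ) ≤ (s : ℕ)) := by simp
        have hxj : ∀ ε : ℝ, xzf m ε j = 1 - ε - ((m : ℝ) - 2) * ε ^ 2 := hxzc
        have e2 : ∀ ε : ℝ, (∑ s ∈ Finset.univ.filter (fun s : Fin m => (j : ℕ) ≤ (s : ℕ)),
            (θ s) ^ 2 * xzf m ε s)
            = θ j ^ 2 * (1 - ε - ((m : ℝ) - 2) * ε ^ 2)
              + (θ b ^ 2 * ε
                + (∑ s ∈ ((Finset.univ.filter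
                    (fun s : Fin m => (j : ℕ) ≤ (s : ℕ))).erase j).erase b,
                    θ s ^ 2) * ε ^ 2) := fun ε => hsum0 _ hcge hbge _ ε
        simp only [hxi, hxj, e1, e2, e3, e4, e5]
        refine tendsto_div_cancel
          (fun ε => ε * (1 - ε - ((m : ℝ) - 2) * ε ^ 2)
            * ((θ i ^ 2 - θ b ^ 2)
              + (∑ s ∈ (Finset.univ.filter (fun k : Fin m => (i : ℕ) < (k : ℕ))).erase b,
                  (θ i ^ 2 - θ s ^ 2)) * ε) ^ 2)
          (fun ε => (θ b ^ 2
              + (∑ s ∈ (Finset.univ.filter (fun t : Fin m => (j : ℕ) < (t : ℕ))).erase b,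
                  θ s ^ 2) * ε)
            * (θ j ^ 2 * (1 - ε - ((m : ℝ) - 2) * ε ^ 2)
              + (θ b ^ 2 * ε
                + (∑ s ∈ ((Finset.univ.filter
                    (fun s : Fin m => (j : ℕ) ≤ (s : ℕ))).erase j).erase b,
                    θ s ^ 2) * ε ^ 2))
            * (1 + (((Finset.univ.filter
                (fun k : Fin m => (i : ℕ) < (k : ℕ))).erase b).card : ℝ) * ε)
            * (1 + (((Finset.univ.filter
                (fun k : Fin m => (i : ℕ) ≤ (k : ℕ))).erase b).card : ℝ) * ε))
          3 (by fun_prop) (by fun_prop) (by norm_num [hθc, hbne]) (fun ε => by ring)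
          (fun ε => by ring) (by norm_num)
      · have hjnb : j ≠ b := by
          intro h; rw [Fin.ext_iff, hb] at h; omega
        have hxj : ∀ ε : ℝ, xzf m ε j = ε ^ 2 := fun ε => hxzo ε j hjc hjnb
        have hj0 : (j : ℕ) ≠ 0 := fun h => hjc (Fin.ext (h.trans hc.symm))
        have hcge : c ∉ Finset.univ.filter (fun s : Fin m => (j : ℕ) ≤ (s : ℕ)) := by
          simp only [Finset.mem_filter, Finset.mem_univ, true_and, hc]; omega
        have e2 : ∀ ε : ℝ, (∑ s ∈ Finset.univ.filter (fun s : Fin m => (j : ℕ) ≤ (s : ℕ)),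
            (θ s) ^ 2 * xzf m ε s)
            = θ b ^ 2 * ε
              + (∑ s ∈ (Finset.univ.filter (fun s : Fin m => (j : ℕ) ≤ (s : ℕ))).erase b,
                  θ s ^ 2) * ε ^ 2 := fun ε => hsum _ hbge hcge _ ε
        simp only [hxi, hxj, e1, e2, e3, e4, e5]
        refine tendsto_div_cancel
          (fun ε => ε ^ 2 * ((θ i ^ 2 - θ b ^ 2)
              + (∑ s ∈ (Finset.univ.filter (fun k : Fin m => (i : ℕ) < (k : ℕ))).erase b,
                  (θ i ^ 2 - θ s ^ 2)) * ε) ^ 2)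
          (fun ε => (θ b ^ 2
              + (∑ s ∈ (Finset.univ.filter (fun t : Fin m => (j : ℕ) < (t : ℕ))).erase b,
                  θ s ^ 2) * ε)
            * (θ b ^ 2
              + (∑ s ∈ (Finset.univ.filter (fun s : Fin m => (j : ℕ) ≤ (s : ℕ))).erase b,
                  θ s ^ 2) * ε)
            * (1 + (((Finset.univ.filter
                (fun k : Fin m => (i : ℕ) < (k : ℕ))).erase b).card : ℝ) * ε)
            * (1 + (((Finset.univ.filter
                (fun k : Fin m => (i : ℕ) ≤ (k : ℕ))).erase b).card : ℝ) * ε))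
          4 (by fun_prop) (by fun_prop) (by norm_num [hbne]) (fun ε => by ring)
          (fun ε => by ring) (by norm_num)
    simpa using h
  -- combine
  have H := hpre.mul ((hA.add hB).add hC)
  have hval : 2 * ((∑ k : Fin m, θ k ^ 2) - 1)
      = 2 * (((if m = 2 then θ b ^ 2 else θ a ^ 2)
          + ∑ j ∈ Finset.univ.filter (fun j : Fin m => (j : ℕ) < m - 2),
              (if j = c then θ b ^ 2 else θ j ^ 2)) + 0) := by
    by_cases hm2 : m = 2
    · rw [if_pos hm2]
      have hemp : Finset.univ.filter (fun j : Fin m => (j : ℕ) < m - 2) = ∅ := by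
        ext j; simp; omega
      have hac : a = c := by rw [Fin.ext_iff, ha, hc]; omega
      rw [hemp, Tsplit' hm θ a b ha hb, hemp]
      simp [hac, hθc]
    · rw [if_neg hm2]
      have hcmem : c ∈ Finset.univ.filter (fun j : Fin m => (j : ℕ) < m - 2) := by
        simp only [Finset.mem_filter, Finset.mem_univ, true_and, hc]; omega
      have hsplit : ∑ j ∈ Finset.univ.filter (fun j : Fin m => (j : ℕ) < m - 2),
          (if j = c then θ b ^ 2 else θ j ^ 2)
          = θ b ^ 2 + ∑ j ∈ (Finset.univ.filter
              (fun j : Fin m => (j : ℕ) < m - 2)).erase c, θ j ^ 2 := by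
        rw [← Finset.add_sum_erase _ _ hcmem, if_pos rfl]
        congr 1
        refine Finset.sum_congr rfl fun s hs => ?_
        rw [if_neg (Finset.ne_of_mem_erase hs)]
      have hsplit2 : ∑ j ∈ (Finset.univ.filter
            (fun j : Fin m => (j : ℕ) < m - 2)).erase c, θ j ^ 2
          = (∑ j ∈ Finset.univ.filter (fun j : Fin m => (j : ℕ) < m - 2), θ j ^ 2)
            - θ c ^ 2 := by
        rw [← Finset.add_sum_erase _ (fun j => θ j ^ 2) hcmem]; ring
      rw [hsplit, hsplit2, Tsplit' hm θ a b ha hb, hθc]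
      ring
  rw [hval]
  simp only [Fx]
  exact H

lemma xzf_b {m : ℕ} (hm : 2 ≤ m) (ε : ℝ) : xzf m ε ⟨m - 1, by omega⟩ = ε := by
  simp only [xzf]; rw [if_neg (by omega)]; simp

lemma sum_xzf (m : ℕ) (hm : 2 ≤ m) (ε : ℝ) : ∑ k : Fin m, xzf m ε k = 1 := by
  have hbc : (⟨m - 1, by omega⟩ : Fin m) ≠ ⟨0, by omega⟩ := by
    simp [Fin.ext_iff]; omega
  have h := sum_decomp0_one (x := xzf m ε) (e0 := 1 - ε - ((m : ℝ) - 2) * ε ^ 2)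
    (eb := ε) (ec := ε ^ 2) (i0 := ⟨0, by omega⟩) (b := ⟨m - 1, by omega⟩)
    (S := Finset.univ) (Finset.mem_univ _) (Finset.mem_univ _) hbc
    (by simp [xzf]) (xzf_b hm ε)
    (fun s _ hsc hsb => by
      simp only [xzf]
      rw [if_neg (fun h => hsc (Fin.ext h)), if_neg (fun h => hsb (Fin.ext h))])
  rw [h]
  have hcard : (((Finset.univ.erase (⟨0, by omega⟩ : Fin m)).erase
      (⟨m - 1, by omega⟩ : Fin m)).card : ℝ) = (m : ℝ) - 2 := by
    rw [Finset.card_erase_of_mem (Finset.mem_erase.mpr ⟨hbc, Finset.mem_univ _⟩),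
      Finset.card_erase_of_mem (Finset.mem_univ _), Finset.card_univ, Fintype.card_fin]
    have h2 : m - 1 - 1 = m - 2 := by omega
    rw [h2, Nat.cast_sub hm]
    norm_num
  rw [hcard]; ring

lemma sum_xwf (m : ℕ) (hm : 2 ≤ m) (ε : ℝ) : ∑ k : Fin m, xwf m ε k = 1 := by
  have h := sum_decomp_one (x := xwf m ε) (eb := 1 - ((m : ℝ) - 1) * ε) (ec := ε)
    (b := (⟨m - 1, by omega⟩ : Fin m)) (S := Finset.univ) (Finset.mem_univ _) (by simp [xwf])
    (fun s _ hsb => by simp only [xwf]; rw [if_neg (fun h => hsb (Fin.ext h))])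
  rw [h]
  have hcard : (((Finset.univ.erase (⟨m - 1, by omega⟩ : Fin m)).card : ℝ))
      = (m : ℝ) - 1 := by
    rw [Finset.card_erase_of_mem (Finset.mem_univ _), Finset.card_univ, Fintype.card_fin]
    rw [Nat.cast_sub (by omega)]
    norm_num
  rw [hcard]; ring

lemma xzf_pos (m : ℕ) (hm : 2 ≤ m) (ε : ℝ) (hε : 0 < ε) (hε2 : ε < 1 / (2 * m)) :
    ∀ k, 0 < xzf m ε k := by
  intro k
  have hm' : (2 : ℝ) ≤ (m : ℝ) := by exact_mod_cast hm
  have hmpos : (0 : ℝ) < 2 * m := by positivity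
  have h1 : ε * (2 * m) < 1 := (lt_div_iff₀ hmpos).mp hε2
  simp only [xzf]
  split_ifs
  · nlinarith [sq_nonneg ε]
  · exact hε
  · positivity

lemma xwf_pos (m : ℕ) (hm : 2 ≤ m) (ε : ℝ) (hε : 0 < ε) (hε2 : ε < 1 / (2 * m)) :
    ∀ k, 0 < xwf m ε k := by
  intro k
  have hm' : (2 : ℝ) ≤ (m : ℝ) := by exact_mod_cast hm
  have hmpos : (0 : ℝ) < 2 * m := by positivity
  have h1 : ε * (2 * m) < 1 := (lt_div_iff₀ hmpos).mp hε2
  simp only [xwf]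
  split_ifs
  · nlinarith
  · exact hε

lemma norm_sqrt_sq (r : ℝ) (hr : 0 ≤ r) : ‖((Real.sqrt r : ℝ) : ℂ)‖ ^ 2 = r := by
  rw [Complex.norm_real, Real.norm_eq_abs, sq_abs, Real.sq_sqrt hr]

end Aux

/-- If `F` is constant on the set of points of the unit sphere with all coordinates nonzero,
then `θ_i = 1` for every `i`, i.e. the flow is the Hopf fibration. -/
theorem stmt19 {m : ℕ} (hm : 2 ≤ m) (θ : Fin m → ℝ) (hθ1 : θ ⟨0, by omega⟩ = 1)
    (hmono : Monotone θ)
    (hconst : ∀ z w : Fin m → ℂ,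
      (∑ k : Fin m, ‖z k‖ ^ 2 = 1) → (∀ k, z k ≠ 0) →
      (∑ k : Fin m, ‖w k‖ ^ 2 = 1) → (∀ k, w k ≠ 0) →
      Ffun θ ⟨m - 2, by omega⟩ ⟨m - 1, by omega⟩ z
        = Ffun θ ⟨m - 2, by omega⟩ ⟨m - 1, by omega⟩ w) :
    ∀ i, θ i = 1 := by
  
  classical
  have hθlb : ∀ k, 1 ≤ θ k := by
    intro k
    have h0 : (⟨0, by omega⟩ : Fin m) ≤ k := by simp [Fin.le_def]
    calc (1:ℝ) = θ ⟨0, by omega⟩ := hθ1.symm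
    _ ≤ θ k := hmono h0
  have hFeq : ∀ z : Fin m → ℂ,
      Ffun θ ⟨m - 2, by omega⟩ ⟨m - 1, by omega⟩ z
        = Fx θ ⟨m - 2, by omega⟩ ⟨m - 1, by omega⟩ (fun k => ‖z k‖ ^ 2) := by
    intro z
    unfold Ffun Fx
    rw [rinner_sphX]
  have hz := tendsto_z m hm θ hθlb ⟨m - 2, by omega⟩ ⟨m - 1, by omega⟩ ⟨0, by omega⟩
    rfl rfl rfl hθ1
  have hw := tendsto_w m hm θ hθlb ⟨m - 2, by omega⟩ ⟨m - 1, by omega⟩ rfl rfl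
  have hmR : (0:ℝ) < (m:ℝ) := by exact_mod_cast (by omega : 0 < m)
  have hδpos : (0:ℝ) < 1 / (2 * m) := by positivity
  have heq : (fun ε => Fx θ ⟨m - 2, by omega⟩ ⟨m - 1, by omega⟩ (xzf m ε))
      =ᶠ[nhdsWithin (0:ℝ) (Set.Ioi 0)]
      (fun ε => Fx θ ⟨m - 2, by omega⟩ ⟨m - 1, by omega⟩ (xwf m ε)) := by
    filter_upwards [Ioo_mem_nhdsGT_of_mem (Set.left_mem_Ico.mpr hδpos)] with ε hε
    obtain ⟨hε1, hε2⟩ := hε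
    have hzpos := xzf_pos m hm ε hε1 hε2
    have hwpos := xwf_pos m hm ε hε1 hε2
    have h1 : (fun k => ‖((Real.sqrt (xzf m ε k) : ℝ) : ℂ)‖ ^ 2) = xzf m ε :=
      funext fun k => norm_sqrt_sq _ (hzpos k).le
    have h2 : (fun k => ‖((Real.sqrt (xwf m ε k) : ℝ) : ℂ)‖ ^ 2) = xwf m ε :=
      funext fun k => norm_sqrt_sq _ (hwpos k).le
    have hc := hconst (fun k => ((Real.sqrt (xzf m ε k) : ℝ) : ℂ))
      (fun k => ((Real.sqrt (xwf m ε k) : ℝ) : ℂ))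
      (by
        calc ∑ k : Fin m, ‖((Real.sqrt (xzf m ε k) : ℝ) : ℂ)‖ ^ 2
            = ∑ k : Fin m, xzf m ε k :=
              Finset.sum_congr rfl fun k _ => norm_sqrt_sq _ (hzpos k).le
          _ = 1 := sum_xzf m hm ε)
      (fun k => Complex.ofReal_ne_zero.mpr (ne_of_gt (Real.sqrt_pos.mpr (hzpos k))))
      (by
        calc ∑ k : Fin m, ‖((Real.sqrt (xwf m ε k) : ℝ) : ℂ)‖ ^ 2
            = ∑ k : Fin m, xwf m ε k :=
              Finset.sum_congr rfl fun k _ => norm_sqrt_sq _ (hwpos k).le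
          _ = 1 := sum_xwf m hm ε)
      (fun k => Complex.ofReal_ne_zero.mpr (ne_of_gt (Real.sqrt_pos.mpr (hwpos k))))
    rw [hFeq, hFeq] at hc
    rw [h1, h2] at hc
    exact hc
  have hkey := tendsto_nhds_unique hz (hw.congr' heq.symm)
  have htb : 1 ≤ θ ⟨m - 1, by omega⟩ := hθlb _
  have htbne : θ (⟨m - 1, by omega⟩ : Fin m) ^ 2 ≠ 0 := by nlinarith
  have hT1 : (1:ℝ) ≤ ∑ k : Fin m, θ k ^ 2 := by
    have hs : θ (⟨0, by omega⟩ : Fin m) ^ 2 ≤ ∑ k : Fin m, θ k ^ 2 :=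
      Finset.single_le_sum (f := fun k => θ k ^ 2)
        (fun k _ => by positivity) (Finset.mem_univ (⟨0, by omega⟩ : Fin m))
    rw [hθ1] at hs
    linarith
  have hkey2 : 2 * ((∑ k : Fin m, θ k ^ 2) - 1) * θ (⟨m - 1, by omega⟩ : Fin m) ^ 2
      = 2 * ((∑ k : Fin m, θ k ^ 2) - θ (⟨m - 1, by omega⟩ : Fin m) ^ 2) := by
    rw [hkey]
    field_simp
  have hle : θ (⟨m - 1, by omega⟩ : Fin m) ^ 2 ≤ 1 := by nlinarith
  have hb1 : θ (⟨m - 1, by omega⟩ : Fin m) = 1 := by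
    nlinarith [sq_nonneg (θ (⟨m - 1, by omega⟩ : Fin m) - 1)]
  intro i
  refine le_antisymm ?_ (hθlb i)
  calc θ i ≤ θ ⟨m - 1, by omega⟩ := hmono (by simp [Fin.le_def]; omega)
  _ = 1 := hb1
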